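/- Let π: (X, (1/r)D) → B be a flat projective family over a projective normal variety B as in the setup for the CM line bundle, with relatively ample polarization L. Suppose c > 1 is rational and L = K_{X/B} + (c/r)D. Then the CM line bundle satisfies λ_{CM,c} = π_*(L^{d+1}). -/

import Mathlib

/-- In the CM line bundle setup over a projective normal base `B`
(`π : X → B` flat projective of relative dimension `d`, `D` a Weil divisor with
`D ∼_{ℚ,B} −r K_{X/B}`, `L` relatively ample), with the Knudsen–Mumford identifications
`λ_{d+1} = π_*(L^{d+1})`, `λ_d = (d/2)π_*(L^{d+1}) + (1/2)π_*(−K_{X/B}·L^d)`,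
`λ̃_d = π_*(L^d·D)` and the fiber constants `a₀ = L_t^d/d!`,
`a₁ = −K_{X_t}·L_t^{d−1}/(2(d−1)!)`, `ã₀ = L_t^{d−1}·D_t/(d−1)!`, set
`M₁ = (2a₁/a₀ + d(d+1))·λ_{d+1} − 2(d+1)·λ_d`, `M₂ = (ã₀/a₀)·λ_{d+1} − (d+1)·λ̃_d` and
`λ_{CM,c} = M₁ − (c/r)·M₂`.  If `c > 1` and `L = K_{X/B} + (c/r)D`, then
`λ_{CM,c} = π_*(L^{d+1})`. -/
theorem stmt_3
    (SetupIsFlatProjectiveFamily BIsProjectiveNormal DIsWeilDivRelEquivMinusrK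
      LIsRelativelyAmple : Prop)
    (hsetup : SetupIsFlatProjectiveFamily) (hB : BIsProjectiveNormal)
    (hD : DIsWeilDivRelEquivMinusrK) (hLa : LIsRelativelyAmple)
    (PicB : Type*) [AddCommGroup PicB] [Module ℚ PicB]
    (d : ℕ) (hd : 1 ≤ d) (r c : ℚ) (hr : 1 < r) (hc : 1 < c)
    (pLd1 pLdK pLdD : PicB)   -- π_*(L^{d+1}), π_*(L^d·K_{X/B}), π_*(L^d·D)
    (Ltd KLt DLt : ℚ)         -- L_t^d, K_{X_t}·L_t^{d−1}, D_t·L_t^{d−1}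
    (hLtd : 0 < Ltd)
    (a0 a1 ta0 : ℚ)
    (ha0 : a0 = Ltd / (d.factorial : ℚ))
    (ha1 : a1 = -KLt / (2 * ((d - 1).factorial : ℚ)))
    (hta0 : ta0 = DLt / ((d - 1).factorial : ℚ))
    (lam_d1 lam_d tlam_d M1 M2 lamCM : PicB)
    (hlam_d1 : lam_d1 = pLd1)
    (hlam_d : lam_d = ((d : ℚ) / 2) • pLd1 + (1 / 2 : ℚ) • (-pLdK))
    (htlam_d : tlam_d = pLdD)
    (hM1 : M1 = (2 * a1 / a0 + (d : ℚ) * ((d : ℚ) + 1)) • lam_d1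
                  - (2 * ((d : ℚ) + 1)) • lam_d)
    (hM2 : M2 = (ta0 / a0) • lam_d1 - ((d : ℚ) + 1) • tlam_d)
    (hlamCM : lamCM = M1 - (c / r) • M2)
    -- L = K_{X/B} + (c/r)D, so L^d·L = L^{d+1} on X and on the fibers:
    (hL : pLdK + (c / r) • pLdD = pLd1)
    (hLt : KLt + (c / r) * DLt = Ltd) :
    lamCM = pLd1 := by
  have hdpos : (0:ℚ) < (d:ℚ) := by exact_mod_cast Nat.pos_of_ne_zero (by omega)
  have hF : ((d.factorial : ℚ)) = (d : ℚ) * (((d - 1).factorial : ℚ)) := by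
    have h1 : d - 1 + 1 = d := Nat.succ_pred_eq_of_pos hd
    conv_lhs => rw [← h1]
    rw [Nat.factorial_succ]
    push_cast [h1]
    ring
  have hFne : (((d - 1).factorial : ℚ)) ≠ 0 := Nat.cast_ne_zero.2 (Nat.factorial_ne_zero _)
  have hLne : Ltd ≠ 0 := hLtd.ne'
  have hrne : r ≠ 0 := by positivity
  have ha0ne : a0 ≠ 0 := by
    rw [ha0, hF]
    positivity
  obtain ⟨q, hq⟩ : ∃ q : ℚ, q = c / r := ⟨c / r, rfl⟩
  rw [← hq] at hlamCM hL hLt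
  have hK : pLdK = pLd1 - q • pLdD := by rw [← hL]; abel
  subst hlamCM hM1 hM2 hlam_d1 hlam_d htlam_d ha0 ha1 hta0 hK
  match_scalars
  · rw [hF]
    field_simp
    linear_combination (-(d:ℚ)) * hLt
  · ring
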